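/- Let α > 0 and let h : (0,∞) → ℝ satisfy h(M) < 0 for all M > 0 and h(M₁) ≥ (M₁/M₂)^{1+α}·h(M₂) whenever 0 < M₁ ≤ M₂. Then h is strictly subadditive in the sense that h(M) < h(M-m) + h(m) for all 0 < m < M. -/
import Mathlib

/-- If `h M < 0` for all `M > 0` and `h M₁ ≥ (M₁/M₂)^(1+α) h M₂` for
`0 < M₁ ≤ M₂`, then `h M < h (M - m) + h m` for `0 < m < M`. -/
theorem stmt_1 (α : ℝ) (hα : 0 < α) (h : ℝ → ℝ)
    (hneg : ∀ M : ℝ, 0 < M → h M < 0)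
    (hscale : ∀ M₁ M₂ : ℝ, 0 < M₁ → M₁ ≤ M₂ →
      (M₁ / M₂) ^ (1 + α) * h M₂ ≤ h M₁) :
    ∀ m M : ℝ, 0 < m → m < M → h M < h (M - m) + h m := by
  intro m M hm hmM
  have hM : 0 < M := hm.trans hmM
  have hMm : 0 < M - m := by linarith
  have h1 := hscale (M - m) M hMm (by linarith)
  have h2 := hscale m M hm (by linarith)
  set t : ℝ := m / M with ht
  have ht0 : 0 < t := div_pos hm hM
  have ht1 : t < 1 := (div_lt_one hM).mpr hmM
  have hMmM : (M - m) / M = 1 - t := by rw [ht, sub_div, div_self hM.ne']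
  have key : t ^ (1 + α) + (1 - t) ^ (1 + α) < 1 := by
    have a1 : t ^ (1 + α) < t ^ (1 : ℝ) :=
      Real.rpow_lt_rpow_of_exponent_gt ht0 ht1 (by linarith)
    have a2 : (1 - t) ^ (1 + α) < (1 - t) ^ (1 : ℝ) :=
      Real.rpow_lt_rpow_of_exponent_gt (by linarith) (by linarith) (by linarith)
    rw [Real.rpow_one] at a1 a2
    linarith
  have hMneg := hneg M hM
  have : (t ^ (1 + α) + (1 - t) ^ (1 + α)) * h M > 1 * h M := by
    exact mul_lt_mul_of_neg_right key hMneg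
  rw [hMmM] at h1
  nlinarith
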